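/- arXiv:2306.00142 — 2 statements merged into one kernel-verified Lean document; each statement's English description precedes it below -/
import Mathlib

section
/- Let Δx > 0 and let (v_p)_{p∈ℤ} be a real sequence with Σ_{p∈ℤ} |v_p| < ∞. Define c_{i+1/2} = Δx Σ_{p∈ℤ} μ(x_{i+1/2−p}) β(v_p), where x_{i+1/2−p} = (i − p)Δx + Δx/2. Then Σ_{i∈ℤ} | ν(c_{i+1/2}) − ν(c_{i−1/2}) | ≤ Lip(ν) Lip(β) ( Δx Σ_{p∈ℤ} |v_p| ) ∫_ℝ |μ'(x)| dx. -/
open MeasureTheory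

/-- The discrete convolution `c_{i+1/2} = Δx Σ_p μ(x_{i+1/2−p}) β(v_p)`,
where `x_{i+1/2−p} = (i − p)Δx + Δx/2`; indexed by `i`. -/
noncomputable def cdisc (μ β : ℝ → ℝ) (Δx : ℝ) (v : ℤ → ℝ) (i : ℤ) : ℝ :=
  Δx * ∑' p : ℤ, μ (((i - p : ℤ) : ℝ) * Δx + Δx / 2) * β (v p)

set_option maxHeartbeats 2000000 in
/-- `Σ_i |ν(c_{i+1/2}) − ν(c_{i−1/2})| ≤ Lip(ν) Lip(β) (Δx Σ_p |v_p|) ∫_ℝ |μ'|`. -/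
theorem stmt16 (ν β μ : ℝ → ℝ) (Lν Lβ : NNReal)
    (hν : LipschitzWith Lν ν) (hβ : LipschitzWith Lβ β)
    (hν0 : ν 0 = 0) (hβ0 : β 0 = 0)
    (hμ : ContDiff ℝ 1 μ) (hμb : ∃ M, ∀ x, |μ x| ≤ M)
    (hμ' : Integrable (deriv μ))
    (Δx : ℝ) (hΔx : 0 < Δx) (v : ℤ → ℝ) (hv : Summable fun p : ℤ => |v p|) :
    (∑' i : ℤ, |ν (cdisc μ β Δx v i) - ν (cdisc μ β Δx v (i - 1))|)
      ≤ (Lν : ℝ) * (Lβ : ℝ) * (Δx * ∑' p : ℤ, |v p|) * ∫ x : ℝ, |deriv μ x| := by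
  obtain ⟨M, hM⟩ := hμb
  have hM0 : 0 ≤ M := le_trans (abs_nonneg _) (hM 0)
  have hcont : Continuous (deriv μ) := hμ.continuous_deriv le_rfl
  set f : ℝ → ℝ := fun t => |deriv μ t| with hfdef
  set x : ℤ → ℝ := fun k => (k : ℝ) * Δx + Δx / 2 with hxdef
  have hxmono : ∀ {k m : ℤ}, k ≤ m → x k ≤ x m := by
    intro k m hkm
    have : (k : ℝ) ≤ (m : ℝ) := by exact_mod_cast hkm
    simp only [hxdef]
    nlinarith
  have hxle : ∀ k : ℤ, x (k - 1) ≤ x k := fun k => hxmono (by omega)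
  set D : ℤ → ℝ := fun k => ∫ t in Set.Ioc (x (k - 1)) (x k), f t with hDdef
  have hD0 : ∀ k, 0 ≤ D k := fun k =>
    setIntegral_nonneg measurableSet_Ioc fun t _ => abs_nonneg _
  -- FTC bound
  have hFTC : ∀ k : ℤ, |μ (x k) - μ (x (k - 1))| ≤ D k := by
    intro k
    have hdiff : ∀ t ∈ Set.uIcc (x (k - 1)) (x k), DifferentiableAt ℝ μ t := fun t _ =>
      (hμ.differentiable one_ne_zero).differentiableAt
    have h1 : ∫ t in x (k - 1)..x k, deriv μ t = μ (x k) - μ (x (k - 1)) :=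
      intervalIntegral.integral_deriv_eq_sub hdiff (hcont.intervalIntegrable _ _)
    rw [← h1]
    calc |∫ t in x (k - 1)..x k, deriv μ t| ≤ ∫ t in x (k - 1)..x k, |deriv μ t| :=
          intervalIntegral.abs_integral_le_integral_abs (hxle k)
      _ = D k := by rw [intervalIntegral.integral_of_le (hxle k)]
  -- sum of D equals the whole integral
  have hUnion : (⋃ k : ℤ, Set.Ioc (x (k - 1)) (x k)) = Set.univ := by
    ext t
    simp only [Set.mem_iUnion, Set.mem_Ioc, Set.mem_univ, iff_true]
    refine ⟨⌈(t - Δx / 2) / Δx⌉, ?_, ?_⟩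
    · have h := Int.ceil_lt_add_one ((t - Δx / 2) / Δx)
      have hy : (t - Δx / 2) / Δx * Δx = t - Δx / 2 := div_mul_cancel₀ _ hΔx.ne'
      have hlt : ((⌈(t - Δx / 2) / Δx⌉ : ℝ) - 1) < (t - Δx / 2) / Δx := by linarith
      have : ((⌈(t - Δx / 2) / Δx⌉ : ℝ) - 1) * Δx < (t - Δx / 2) / Δx * Δx :=
        mul_lt_mul_of_pos_right hlt hΔx
      simp only [hxdef]
      push_cast
      linarith [this, hy]
    · have h := Int.le_ceil ((t - Δx / 2) / Δx)
      have hy : (t - Δx / 2) / Δx * Δx = t - Δx / 2 := div_mul_cancel₀ _ hΔx.ne'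
      have : (t - Δx / 2) / Δx * Δx ≤ (⌈(t - Δx / 2) / Δx⌉ : ℝ) * Δx :=
        mul_le_mul_of_nonneg_right h hΔx.le
      simp only [hxdef]
      linarith [this, hy]
  have hdisj : Pairwise (Function.onFun Disjoint fun k : ℤ => Set.Ioc (x (k - 1)) (x k)) := by
    intro k l hkl
    simp only [Function.onFun]
    rw [Set.Ioc_disjoint_Ioc]
    rcases lt_or_gt_of_ne hkl with h | h
    · exact le_trans (min_le_left _ _) (le_trans (hxmono (by omega)) (le_max_right _ _))
    · exact le_trans (min_le_right _ _) (le_trans (hxmono (by omega)) (le_max_left _ _))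
  have hfint : Integrable f := hμ'.abs
  have hHasSumD : HasSum D (∫ t : ℝ, f t) := by
    have := MeasureTheory.hasSum_integral_iUnion
      (fun k : ℤ => measurableSet_Ioc (a := x (k - 1)) (b := x k)) hdisj
      (hfint.integrableOn (s := ⋃ k : ℤ, Set.Ioc (x (k - 1)) (x k)))
    rwa [hUnion, Measure.restrict_univ] at this
  have hDsum : Summable D := hHasSumD.summable
  set I : ℝ := ∫ t : ℝ, f t with hIdef
  have hI0 : 0 ≤ I := integral_nonneg fun t => abs_nonneg _
  have hDtsum : ∑' k, D k = I := hHasSumD.tsum_eq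
  -- the sequence w
  set w : ℤ → ℝ := fun p => β (v p) with hwdef
  have hwle : ∀ p, |w p| ≤ (Lβ : ℝ) * |v p| := by
    intro p
    have := hβ.dist_le_mul (v p) 0
    rwa [Real.dist_eq, Real.dist_eq, hβ0, sub_zero, sub_zero] at this
  have hwsum : Summable fun p => |w p| :=
    Summable.of_nonneg_of_le (fun p => abs_nonneg _) hwle (hv.mul_left _)
  set W : ℝ := ∑' p, |w p| with hWdef
  have hW0 : 0 ≤ W := tsum_nonneg fun p => abs_nonneg _
  have hwleW : ∀ p, |w p| ≤ W := fun p => Summable.le_tsum hwsum p fun q _ => abs_nonneg _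
  -- summability of the series defining cdisc
  have hsum : ∀ i : ℤ, Summable fun p => μ (x (i - p)) * w p := by
    intro i
    apply Summable.of_abs
    apply Summable.of_nonneg_of_le (fun p => abs_nonneg _) _ ((hv.mul_left (M * Lβ)))
    intro p
    rw [abs_mul]
    calc |μ (x (i - p))| * |w p| ≤ M * ((Lβ : ℝ) * |v p|) :=
          mul_le_mul (hM _) (hwle p) (abs_nonneg _) hM0
      _ = M * (Lβ : ℝ) * |v p| := by ring
  have hc : ∀ i : ℤ, cdisc μ β Δx v i = Δx * ∑' p, μ (x (i - p)) * w p := fun i => rfl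
  -- summability of D (i - ·)
  have hDsum' : ∀ i : ℤ, Summable fun p : ℤ => D (i - p) := fun i =>
    (Equiv.subLeft i).summable_iff.mpr hDsum
  have hDw : ∀ i : ℤ, Summable fun p : ℤ => D (i - p) * |w p| := by
    intro i
    apply Summable.of_nonneg_of_le (fun p => mul_nonneg (hD0 _) (abs_nonneg _)) _
      ((hDsum' i).mul_right W)
    exact fun p => mul_le_mul_of_nonneg_left (hwleW p) (hD0 _)
  -- key pointwise bound
  have hkey : ∀ i : ℤ, |ν (cdisc μ β Δx v i) - ν (cdisc μ β Δx v (i - 1))|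
      ≤ (Lν : ℝ) * Δx * ∑' p, D (i - p) * |w p| := by
    intro i
    have h1 : |ν (cdisc μ β Δx v i) - ν (cdisc μ β Δx v (i - 1))|
        ≤ (Lν : ℝ) * |cdisc μ β Δx v i - cdisc μ β Δx v (i - 1)| := by
      have := hν.dist_le_mul (cdisc μ β Δx v i) (cdisc μ β Δx v (i - 1))
      rwa [Real.dist_eq, Real.dist_eq] at this
    refine le_trans h1 ?_
    rw [mul_assoc]
    apply mul_le_mul_of_nonneg_left _ (NNReal.coe_nonneg Lν)
    rw [hc, hc, ← mul_sub, ← Summable.tsum_sub (hsum i) (hsum (i - 1)), abs_mul,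
      abs_of_pos hΔx]
    apply mul_le_mul_of_nonneg_left _ hΔx.le
    have hsub : Summable fun p : ℤ =>
        |μ (x (i - p)) * w p - μ (x (i - 1 - p)) * w p| :=
      ((hsum i).sub (hsum (i - 1))).abs
    calc |∑' p, (μ (x (i - p)) * w p - μ (x (i - 1 - p)) * w p)|
        ≤ ∑' p, |μ (x (i - p)) * w p - μ (x (i - 1 - p)) * w p| := by
          simpa [Real.norm_eq_abs] using
            norm_tsum_le_tsum_norm (f := fun p : ℤ =>
              μ (x (i - p)) * w p - μ (x (i - 1 - p)) * w p)
              (by simpa [Real.norm_eq_abs] using hsub)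
      _ ≤ ∑' p, D (i - p) * |w p| := by
          apply Summable.tsum_le_tsum _ hsub (hDw i)
          intro p
          have hix : i - 1 - p = i - p - 1 := by omega
          rw [← sub_mul, abs_mul, hix]
          exact mul_le_mul_of_nonneg_right (hFTC (i - p)) (abs_nonneg _)
  -- the double family (index (p, i))
  have hDi : ∀ p : ℤ, ∑' i : ℤ, D (i - p) = I := by
    intro p
    rw [← hDtsum]
    exact Equiv.tsum_eq (Equiv.subRight p) D
  have hDp : ∀ p : ℤ, Summable fun i : ℤ => D (i - p) := fun p =>
    (Equiv.subRight p).summable_iff.mpr hDsum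
  have hF' : Summable (fun q : ℤ × ℤ => D (q.2 - q.1) * |w q.1|) := by
    apply (summable_prod_of_nonneg (fun q => mul_nonneg (hD0 _) (abs_nonneg _))).mpr
    constructor
    · intro p
      simp only
      exact (hDp p).mul_right _
    · simp only
      apply Summable.congr (hwsum.mul_left I)
      intro p
      rw [eq_comm, tsum_mul_right, hDi p]
  have hF : Summable (fun q : ℤ × ℤ => D (q.1 - q.2) * |w q.2|) :=
    (Equiv.prodComm ℤ ℤ).summable_iff.mp
      (hF' : Summable ((fun q : ℤ × ℤ => D (q.1 - q.2) * |w q.2|) ∘ Equiv.prodComm ℤ ℤ))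
  have hG : Summable fun i : ℤ => ∑' p, D (i - p) * |w p| :=
    ((summable_prod_of_nonneg (fun q => mul_nonneg (hD0 _) (abs_nonneg _))).mp hF).2
  have hGtsum : ∑' i : ℤ, ∑' p, D (i - p) * |w p| = I * W := by
    rw [← Summable.tsum_prod hF]
    rw [← Equiv.tsum_eq (Equiv.prodComm ℤ ℤ)
      (fun q : ℤ × ℤ => D (q.1 - q.2) * |w q.2|)]
    simp only [Equiv.prodComm_apply, Prod.fst_swap, Prod.snd_swap]
    rw [Summable.tsum_prod hF']
    calc ∑' (p : ℤ) (i : ℤ), D (i - p) * |w p| = ∑' p : ℤ, I * |w p| := by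
          refine tsum_congr fun p => ?_
          rw [tsum_mul_right, hDi p]
      _ = I * W := by rw [hWdef, tsum_mul_left]
  -- conclusion
  have hLHSsum : Summable fun i : ℤ =>
      |ν (cdisc μ β Δx v i) - ν (cdisc μ β Δx v (i - 1))| :=
    Summable.of_nonneg_of_le (fun i => abs_nonneg _) hkey (hG.mul_left _)
  calc (∑' i : ℤ, |ν (cdisc μ β Δx v i) - ν (cdisc μ β Δx v (i - 1))|)
      ≤ ∑' i : ℤ, (Lν : ℝ) * Δx * ∑' p, D (i - p) * |w p| :=
        Summable.tsum_le_tsum hkey hLHSsum (hG.mul_left _)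
    _ = (Lν : ℝ) * Δx * (I * W) := by rw [tsum_mul_left, hGtsum]
    _ ≤ (Lν : ℝ) * (Lβ : ℝ) * (Δx * ∑' p, |v p|) * I := by
        have hWle : W ≤ (Lβ : ℝ) * ∑' p, |v p| := by
          rw [hWdef, ← tsum_mul_left]
          exact Summable.tsum_le_tsum hwle hwsum (hv.mul_left _)
        have h2 := mul_le_mul_of_nonneg_left hWle
          (mul_nonneg (mul_nonneg (NNReal.coe_nonneg Lν) hΔx.le) hI0)
        calc (Lν : ℝ) * Δx * (I * W) = (Lν : ℝ) * Δx * I * W := by ring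
          _ ≤ (Lν : ℝ) * Δx * I * ((Lβ : ℝ) * ∑' p, |v p|) := h2
          _ = (Lν : ℝ) * (Lβ : ℝ) * (Δx * ∑' p, |v p|) * I := by ring
end

section
/- Let Δx > 0 and let (v_p)_{p∈ℤ} and (w_p)_{p∈ℤ} be real sequences with Σ_p |v_p| < ∞ and Σ_p |w_p| < ∞. Define c^v_{i+1/2} = Δx Σ_{p∈ℤ} μ(x_{i+1/2−p}) β(v_p) and c^w_{i+1/2} = Δx Σ_{p∈ℤ} μ(x_{i+1/2−p}) β(w_p), where x_{i+1/2−p} = (i − p)Δx + Δx/2. Then Σ_{i∈ℤ} | (c^v_{i+1/2} − c^v_{i−1/2}) − (c^w_{i+1/2} − c^w_{i−1/2}) | ≤ Lip(β) ( ∫_ℝ |μ'(x)| dx ) Δx Σ_{p∈ℤ} |v_p − w_p|. -/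
open MeasureTheory

/-- Shear equivalence on `ℤ × ℤ`. -/
def shearZ : ℤ × ℤ ≃ ℤ × ℤ where
  toFun q := (q.1 + q.2, q.2)
  invFun q := (q.1 - q.2, q.2)
  left_inv q := by simp
  right_inv q := by simp

set_option maxHeartbeats 1000000 in
/-- `Σ_i |(c^v_{i+1/2} − c^v_{i−1/2}) − (c^w_{i+1/2} − c^w_{i−1/2})|
      ≤ Lip(β) (∫_ℝ |μ'|) Δx Σ_p |v_p − w_p|`. -/
theorem stmt17 (β μ : ℝ → ℝ) (Lβ : NNReal)
    (hβ : LipschitzWith Lβ β) (hβ0 : β 0 = 0)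
    (hμ : ContDiff ℝ 1 μ) (hμb : ∃ M, ∀ x, |μ x| ≤ M)
    (hμ' : Integrable (deriv μ))
    (Δx : ℝ) (hΔx : 0 < Δx) (v w : ℤ → ℝ)
    (hv : Summable fun p : ℤ => |v p|) (hw : Summable fun p : ℤ => |w p|) :
    (∑' i : ℤ, |(cdisc μ β Δx v i - cdisc μ β Δx v (i - 1))
                 - (cdisc μ β Δx w i - cdisc μ β Δx w (i - 1))|)
      ≤ (Lβ : ℝ) * (∫ x : ℝ, |deriv μ x|) * (Δx * ∑' p : ℤ, |v p - w p|) := by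
  obtain ⟨M, hM⟩ := hμb
  have hM0 : 0 ≤ M := le_trans (abs_nonneg _) (hM 0)
  have hβle : ∀ x : ℝ, |β x| ≤ (Lβ : ℝ) * |x| := by
    intro x
    have := hβ.dist_le_mul x 0
    simpa [hβ0, Real.dist_eq] using this
  have hβsub : ∀ x y : ℝ, |β x - β y| ≤ (Lβ : ℝ) * |x - y| := by
    intro x y
    simpa [Real.dist_eq] using hβ.dist_le_mul x y
  set f : ℤ → ℝ := fun p => β (v p) - β (w p) with hfdef
  have hvw : Summable fun p : ℤ => |v p - w p| := by
    refine (hv.add hw).of_nonneg_of_le (fun p => abs_nonneg _) fun p => ?_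
    exact abs_sub _ _
  have hfsum : Summable fun p : ℤ => |f p| := by
    refine (hvw.mul_left (Lβ : ℝ)).of_nonneg_of_le (fun p => abs_nonneg _) fun p => ?_
    exact hβsub _ _
  -- summability of the convolution terms
  have hAsum : ∀ (j : ℤ) (u : ℤ → ℝ), (Summable fun p : ℤ => |u p|) →
      Summable fun p : ℤ => μ (((j - p : ℤ) : ℝ) * Δx + Δx / 2) * β (u p) := by
    intro j u hu
    refine Summable.of_norm ?_
    refine (hu.mul_left (M * (Lβ : ℝ))).of_nonneg_of_le (fun p => norm_nonneg _) fun p => ?_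
    rw [Real.norm_eq_abs, abs_mul, mul_assoc]
    exact mul_le_mul (hM _) (hβle _) (abs_nonneg _) hM0
  -- the increments of μ
  set g : ℤ → ℝ := fun k => μ ((k : ℝ) * Δx + Δx / 2) - μ (((k : ℝ) - 1) * Δx + Δx / 2)
    with hgdef
  set I : ℤ → Set ℝ := fun k => Set.Ioc (((k : ℝ) - 1) * Δx + Δx / 2) ((k : ℝ) * Δx + Δx / 2)
    with hIdef
  have hab : ∀ k : ℤ, ((k : ℝ) - 1) * Δx + Δx / 2 ≤ (k : ℝ) * Δx + Δx / 2 := by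
    intro k; nlinarith
  have hgle : ∀ k : ℤ, |g k| ≤ ∫ x in I k, |deriv μ x| := by
    intro k
    have hderiv : ∀ x ∈ Set.uIcc (((k : ℝ) - 1) * Δx + Δx / 2) ((k : ℝ) * Δx + Δx / 2),
        DifferentiableAt ℝ μ x := fun x _ =>
      (hμ.differentiable one_ne_zero) x
    have hint : IntervalIntegrable (deriv μ) volume (((k : ℝ) - 1) * Δx + Δx / 2)
        ((k : ℝ) * Δx + Δx / 2) := hμ'.intervalIntegrable
    have heq : g k = ∫ x in (((k : ℝ) - 1) * Δx + Δx / 2)..((k : ℝ) * Δx + Δx / 2),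
        deriv μ x := by
      rw [intervalIntegral.integral_deriv_eq_sub hderiv hint, hgdef]
    rw [heq, hIdef]
    calc |∫ x in (((k : ℝ) - 1) * Δx + Δx / 2)..((k : ℝ) * Δx + Δx / 2), deriv μ x|
        ≤ ∫ x in (((k : ℝ) - 1) * Δx + Δx / 2)..((k : ℝ) * Δx + Δx / 2), |deriv μ x| :=
          intervalIntegral.abs_integral_le_integral_abs (hab k)
      _ = ∫ x in Set.Ioc (((k : ℝ) - 1) * Δx + Δx / 2) ((k : ℝ) * Δx + Δx / 2), |deriv μ x| :=
          intervalIntegral.integral_of_le (hab k)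
  have hdisj : Pairwise (Function.onFun Disjoint I) := by
    intro k l hkl
    simp only [Function.onFun, hIdef]
    rw [Set.Ioc_disjoint_Ioc]
    rcases lt_or_gt_of_ne hkl with h | h
    · refine le_trans (min_le_left _ _) (le_trans ?_ (le_max_right _ _))
      have : (k : ℝ) ≤ (l : ℝ) - 1 := by
        have : (k : ℝ) + 1 ≤ l := by exact_mod_cast h
        linarith
      nlinarith
    · refine le_trans (min_le_right _ _) (le_trans ?_ (le_max_left _ _))
      have : (l : ℝ) ≤ (k : ℝ) - 1 := by
        have : (l : ℝ) + 1 ≤ k := by exact_mod_cast h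
        linarith
      nlinarith
  have hintOn : IntegrableOn (fun x => |deriv μ x|) (⋃ k, I k) volume :=
    hμ'.abs.integrableOn
  have hHS : HasSum (fun k : ℤ => ∫ x in I k, |deriv μ x|)
      (∫ x in ⋃ k, I k, |deriv μ x|) :=
    hasSum_integral_iUnion (fun k => measurableSet_Ioc) hdisj hintOn
  have hSsum : Summable fun k : ℤ => |g k| :=
    hHS.summable.of_nonneg_of_le (fun k => abs_nonneg _) hgle
  have hSle : (∑' k : ℤ, |g k|) ≤ ∫ x : ℝ, |deriv μ x| := by
    calc (∑' k : ℤ, |g k|) ≤ ∑' k : ℤ, ∫ x in I k, |deriv μ x| :=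
          Summable.tsum_le_tsum hgle hSsum hHS.summable
      _ = ∫ x in ⋃ k, I k, |deriv μ x| := hHS.tsum_eq
      _ ≤ ∫ x : ℝ, |deriv μ x| :=
          setIntegral_le_integral hμ'.abs (Filter.Eventually.of_forall fun x => abs_nonneg _)
  -- the key per-index identity
  have key : ∀ i : ℤ,
      (cdisc μ β Δx v i - cdisc μ β Δx v (i - 1)) - (cdisc μ β Δx w i - cdisc μ β Δx w (i - 1))
        = Δx * ∑' p : ℤ, g (i - p) * f p := by
    intro i
    have hv1 := hAsum i v hv
    have hv2 := hAsum (i - 1) v hv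
    have hw1 := hAsum i w hw
    have hw2 := hAsum (i - 1) w hw
    have e1 : ∀ p : ℤ, g (i - p) * f p =
        (μ (((i - p : ℤ) : ℝ) * Δx + Δx / 2) * β (v p)
          - μ (((i - 1 - p : ℤ) : ℝ) * Δx + Δx / 2) * β (v p))
        - (μ (((i - p : ℤ) : ℝ) * Δx + Δx / 2) * β (w p)
          - μ (((i - 1 - p : ℤ) : ℝ) * Δx + Δx / 2) * β (w p)) := by
      intro p
      have hcast : ((i - 1 - p : ℤ) : ℝ) * Δx + Δx / 2
          = (((i - p : ℤ) : ℝ) - 1) * Δx + Δx / 2 := by push_cast; ring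
      rw [hcast, hgdef, hfdef]
      ring
    rw [tsum_congr e1, Summable.tsum_sub (hv1.sub hv2) (hw1.sub hw2), Summable.tsum_sub hv1 hv2, Summable.tsum_sub hw1 hw2]
    simp only [cdisc]
    ring
  -- the double-sum majorant
  set F : ℤ × ℤ → ℝ := fun q => |g (q.1 - q.2)| * |f q.2| with hFdef
  have hF : Summable F := by
    have h1 : Summable fun q : ℤ × ℤ => |g q.1| * |f q.2| :=
      hSsum.mul_of_nonneg hfsum (fun k => abs_nonneg _) fun p => abs_nonneg _
    have h2 : Summable (F ∘ shearZ) := by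
      refine h1.congr fun q => ?_
      simp [hFdef, shearZ]
    exact shearZ.summable_iff.mp h2
  have hFfiber : ∀ i : ℤ, Summable fun p : ℤ => F (i, p) := fun i => hF.prod_factor i
  have houter : HasSum (fun i : ℤ => ∑' p : ℤ, F (i, p)) (∑' q : ℤ × ℤ, F q) :=
    hF.hasSum.prod_fiberwise fun i => (hFfiber i).hasSum
  have hFfiber2 : ∀ p : ℤ, Summable fun i : ℤ => F (i, p) := by
    intro p
    have h1 : Summable fun k : ℤ => |g k| * |f p| := hSsum.mul_right _
    exact (Equiv.subRight p).summable_iff.mpr h1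
  -- pointwise bound
  have habs : ∀ i : ℤ,
      |(cdisc μ β Δx v i - cdisc μ β Δx v (i - 1))
        - (cdisc μ β Δx w i - cdisc μ β Δx w (i - 1))|
      ≤ Δx * ∑' p : ℤ, F (i, p) := by
    intro i
    rw [key i, abs_mul, abs_of_pos hΔx]
    refine mul_le_mul_of_nonneg_left ?_ hΔx.le
    have hnorm : Summable fun p : ℤ => ‖g (i - p) * f p‖ := by
      refine (hFfiber i).congr fun p => ?_
      rw [Real.norm_eq_abs, abs_mul, hFdef]
    calc |∑' p : ℤ, g (i - p) * f p| = ‖∑' p : ℤ, g (i - p) * f p‖ :=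
          (Real.norm_eq_abs _).symm
      _ ≤ ∑' p : ℤ, ‖g (i - p) * f p‖ := norm_tsum_le_tsum_norm hnorm
      _ = ∑' p : ℤ, F (i, p) := tsum_congr fun p => by
          rw [Real.norm_eq_abs, abs_mul, hFdef]
  have hLsum : Summable fun i : ℤ =>
      |(cdisc μ β Δx v i - cdisc μ β Δx v (i - 1))
        - (cdisc μ β Δx w i - cdisc μ β Δx w (i - 1))| :=
    (houter.summable.mul_left Δx).of_nonneg_of_le (fun i => abs_nonneg _) habs
  have hswap : (∑' p : ℤ, ∑' i : ℤ, F (i, p)) = ∑' i : ℤ, ∑' p : ℤ, F (i, p) :=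
    Summable.tsum_comm' (f := fun i p => F (i, p)) hF hFfiber hFfiber2
  have hfle : (∑' p : ℤ, |f p|) ≤ (Lβ : ℝ) * ∑' p : ℤ, |v p - w p| := by
    rw [← tsum_mul_left]
    exact Summable.tsum_le_tsum (fun p => hβsub _ _) hfsum (hvw.mul_left _)
  have hS0 : 0 ≤ ∑' k : ℤ, |g k| := tsum_nonneg fun k => abs_nonneg _
  have hf0 : 0 ≤ ∑' p : ℤ, |f p| := tsum_nonneg fun p => abs_nonneg _
  have hI0 : 0 ≤ ∫ x : ℝ, |deriv μ x| := integral_nonneg fun x => abs_nonneg _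
  calc (∑' i : ℤ, |(cdisc μ β Δx v i - cdisc μ β Δx v (i - 1))
                 - (cdisc μ β Δx w i - cdisc μ β Δx w (i - 1))|)
      ≤ ∑' i : ℤ, Δx * ∑' p : ℤ, F (i, p) :=
        Summable.tsum_le_tsum habs hLsum (houter.summable.mul_left Δx)
    _ = Δx * ∑' i : ℤ, ∑' p : ℤ, F (i, p) := tsum_mul_left
    _ = Δx * ∑' p : ℤ, ∑' i : ℤ, F (i, p) := by rw [hswap]
    _ = Δx * ∑' p : ℤ, (∑' k : ℤ, |g k|) * |f p| := by
        congr 1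
        refine tsum_congr fun p => ?_
        have h1 : (∑' i : ℤ, F (i, p)) = ∑' i : ℤ, |g (i - p)| * |f p| :=
          tsum_congr fun i => by rw [hFdef]
        rw [h1, tsum_mul_right]
        congr 1
        exact (Equiv.subRight p).tsum_eq fun k => |g k|
    _ = Δx * ((∑' k : ℤ, |g k|) * ∑' p : ℤ, |f p|) := by rw [tsum_mul_left]
    _ ≤ Δx * ((∫ x : ℝ, |deriv μ x|) * ((Lβ : ℝ) * ∑' p : ℤ, |v p - w p|)) := by
        refine mul_le_mul_of_nonneg_left ?_ hΔx.le
        exact mul_le_mul hSle hfle hf0 hI0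
    _ = (Lβ : ℝ) * (∫ x : ℝ, |deriv μ x|) * (Δx * ∑' p : ℤ, |v p - w p|) := by ring
end
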